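/- Let ℍ be the algebra of real quaternions with its conjugation as star operation, let r₁, r₂ be natural numbers, and let V be a matrix with r₁ rows and r₂ + r₁ columns with entries in ℍ. Then there exists a matrix k of size (r₂ + r₁) × (r₂ + r₁) over ℍ belonging to the unitary group of the matrix star-ring (i.e. k * star k = 1 = star k * k, where star is the conjugate transpose) such that the first r₂ columns of V * k are zero: for every row index i and every column index j with j < r₂, (V * k) i j = 0. -/

import Mathlib

open Quaternion Matrix

noncomputable section Stmt12Aux

/-- Dot pairing against a fixed vector, as a real-linear map. -/
def dotL {n : ℕ} (v : Fin n → ℍ[ℝ]) : (Fin n → ℍ[ℝ]) →ₗ[ℝ] ℍ[ℝ] where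
  toFun x := ∑ j, v j * x j
  map_add' x y := by simp [mul_add, Finset.sum_add_distrib]
  map_smul' r x := by simp [mul_smul_comm, Finset.smul_sum]

lemma dotL_apply {n : ℕ} (v x : Fin n → ℍ[ℝ]) : dotL v x = ∑ j, v j * x j := rfl

lemma exists_ne_zero_ker {n : ℕ} {ι : Type} [Fintype ι] (hn : Fintype.card ι < n)
    (f : ι → ((Fin n → ℍ[ℝ]) →ₗ[ℝ] ℍ[ℝ])) :
    ∃ x : Fin n → ℍ[ℝ], x ≠ 0 ∧ ∀ i, f i x = 0 := by
  by_contra hx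
  push_neg at hx
  have hinj : Function.Injective (LinearMap.pi f) := by
    rw [← LinearMap.ker_eq_bot, LinearMap.ker_eq_bot']
    intro x hxk
    by_contra hx0
    obtain ⟨i, hi⟩ := hx x hx0
    exact hi (congrFun hxk i)
  have hle := LinearMap.finrank_le_finrank_of_injective hinj
  rw [Module.finrank_pi_fintype, Module.finrank_pi_fintype] at hle
  simp only [Quaternion.finrank_eq_four, Finset.sum_const, Finset.card_univ,
    Fintype.card_fin, smul_eq_mul] at hle
  omega

lemma exists_unit_ker {n : ℕ} {ι : Type} [Fintype ι] (hn : Fintype.card ι < n)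
    (f : ι → ((Fin n → ℍ[ℝ]) →ₗ[ℝ] ℍ[ℝ])) :
    ∃ x : Fin n → ℍ[ℝ], (∑ j, star (x j) * x j) = 1 ∧ ∀ i, f i x = 0 := by
  obtain ⟨x, hx0, hxf⟩ := exists_ne_zero_ker hn f
  set t : ℝ := ∑ j, normSq (x j) with ht
  have htpos : 0 < t := by
    have hj : ∃ j, x j ≠ 0 := by
      by_contra h; push_neg at h; exact hx0 (funext h)
    obtain ⟨j, hj⟩ := hj
    refine Finset.sum_pos' (fun i _ => normSq_nonneg) ⟨j, Finset.mem_univ j, ?_⟩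
    exact lt_of_le_of_ne normSq_nonneg (Ne.symm (normSq_ne_zero.mpr hj))
  set s : ℝ := (Real.sqrt t)⁻¹ with hs
  refine ⟨s • x, ?_, fun i => by rw [LinearMap.map_smul, hxf i, smul_zero]⟩
  have h1 : ∀ j, star ((s • x) j) * ((s • x) j) = (s * s) • (star (x j) * x j) := by
    intro j
    simp [Pi.smul_apply, Quaternion.star_smul, smul_mul_assoc, mul_smul_comm, smul_smul]
  have h2 : (∑ j, star (x j) * x j) = ((t : ℝ) : ℍ[ℝ]) := by
    have := map_sum (algebraMap ℝ ℍ[ℝ]) (fun j => normSq (x j)) Finset.univ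
    rw [Quaternion.algebraMap_def] at this
    rw [ht, this]
    exact Finset.sum_congr rfl fun j _ => star_mul_self (x j)
  rw [Finset.sum_congr rfl fun j _ => h1 j, ← Finset.smul_sum, h2,
    Quaternion.smul_coe]
  have hst : s * s * t = 1 := by
    rw [hs, ← Real.sqrt_mul_self htpos.le]
    field_simp
    rw [Real.sq_sqrt (Real.sqrt_nonneg _)]
  rw [hst]; exact Quaternion.coe_one

lemma exists_orthonormal (r₁ r₂ : ℕ) (V : Matrix (Fin r₁) (Fin (r₂ + r₁)) ℍ[ℝ]) :
    ∀ m, m ≤ r₂ + r₁ → ∃ c : Fin m → (Fin (r₂ + r₁) → ℍ[ℝ]),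
      (∀ a b, (∑ j, star (c a j) * c b j) = if a = b then 1 else 0) ∧
      (∀ a : Fin m, (a : ℕ) < r₂ → ∀ i, ∑ j, V i j * c a j = 0) := by
  intro m
  induction m with
  | zero =>
      exact fun _ => ⟨fun a => a.elim0, fun a => a.elim0, fun a => a.elim0⟩
  | succ m ih =>
      intro hm
      obtain ⟨c, hON, hW⟩ := ih (Nat.le_of_succ_le hm)
      -- get the new vector y
      obtain ⟨y, hy1, hyc, hyW⟩ :
          ∃ y : Fin (r₂ + r₁) → ℍ[ℝ], (∑ j, star (y j) * y j) = 1 ∧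
            (∀ a, (∑ j, star (c a j) * y j) = 0) ∧
            ((m < r₂) → ∀ i, (∑ j, V i j * y j) = 0) := by
        by_cases hmr : m < r₂
        · have hcard : Fintype.card (Fin m ⊕ Fin r₁) < r₂ + r₁ := by
            simp only [Fintype.card_sum, Fintype.card_fin]; omega
          obtain ⟨y, hy1, hy2⟩ := exists_unit_ker hcard
            (Sum.elim (fun a => dotL (fun j => star (c a j))) (fun i => dotL (V i)))
          exact ⟨y, hy1, fun a => hy2 (Sum.inl a), fun _ i => hy2 (Sum.inr i)⟩
        · have hcard : Fintype.card (Fin m) < r₂ + r₁ := by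
            simp only [Fintype.card_fin]; omega
          obtain ⟨y, hy1, hy2⟩ := exists_unit_ker hcard
            (fun a => dotL (fun j => star (c a j)))
          exact ⟨y, hy1, fun a => hy2 a, fun h => absurd h hmr⟩
      refine ⟨Fin.snoc c y, ?_, ?_⟩
      · intro a b
        refine Fin.lastCases ?_ (fun a => ?_) a
        · refine Fin.lastCases ?_ (fun b => ?_) b
          · simp [Fin.snoc_last, hy1]
          · have : (∑ j, star (y j) * c b j) = 0 := by
              have := hyc b
              calc (∑ j, star (y j) * c b j)
                  = star (∑ j, star (c b j) * y j) := by
                    rw [star_sum]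
                    exact Finset.sum_congr rfl fun j _ => by
                      rw [StarMul.star_mul, star_star]
                _ = 0 := by rw [this, star_zero]
            simp only [Fin.snoc_last, Fin.snoc_castSucc]
            rw [this, if_neg (Fin.castSucc_lt_last b).ne']
        · refine Fin.lastCases ?_ (fun b => ?_) b
          · simp only [Fin.snoc_last, Fin.snoc_castSucc]
            rw [hyc a, if_neg (Fin.castSucc_lt_last a).ne]
          · simp only [Fin.snoc_castSucc]
            rw [hON a b]
            congr 1
            simp [Fin.castSucc_inj]
      · intro a ha i
        revert ha
        refine Fin.lastCases ?_ (fun a' => ?_) a <;> intro ha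
        · have hml : m < r₂ := by simpa using ha
          simp only [Fin.snoc_last]
          exact hyW hml i
        · simp only [Fin.snoc_castSucc]
          exact hW a' (by simpa using ha) i


lemma mul_conjTranspose_of {n : ℕ} (k : Matrix (Fin n) (Fin n) ℍ[ℝ])
    (h : kᴴ * k = 1) : k * kᴴ = 1 := by
  let L : Matrix (Fin n) (Fin n) ℍ[ℝ] → ((Fin n → ℍ[ℝ]) →ₗ[ℍ[ℝ]] (Fin n → ℍ[ℝ])) := fun A =>
    { toFun := fun x => x ᵥ* A
      map_add' := fun x y => Matrix.add_vecMul A x y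
      map_smul' := fun r x => Matrix.smul_vecMul r x A }
  have hLk : ∀ A x, L A x = x ᵥ* A := fun _ _ => rfl
  have hsurj : Function.Surjective (L k) := fun x =>
    ⟨L kᴴ x, by rw [hLk, hLk, Matrix.vecMul_vecMul, h, Matrix.vecMul_one]⟩
  have hinj := (LinearMap.injective_iff_surjective).mpr hsurj
  have hid : ∀ x : Fin n → ℍ[ℝ], x ᵥ* (k * kᴴ) = x := by
    intro x
    apply hinj
    rw [hLk, hLk, Matrix.vecMul_vecMul, mul_assoc, h, mul_one]
  refine Matrix.ext fun a b => ?_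
  have := congrFun (hid (Pi.single a 1)) b
  rw [Matrix.single_one_vecMul, Matrix.row_apply] at this
  rw [this, Matrix.one_apply, Pi.single_apply]
  simp [eq_comm]

end Stmt12Aux

/-- Archimedean matrix lemma (case `D = ℍ`): for any `r₁ × (r₂ + r₁)` matrix
`V` over the real quaternions, there is a unitary matrix `k` (for the
conjugate-transpose star) such that the first `r₂` columns of `V * k`
vanish. -/
theorem stmt_12 (r₁ r₂ : ℕ) (V : Matrix (Fin r₁) (Fin (r₂ + r₁)) ℍ[ℝ]) :
    ∃ k : Matrix (Fin (r₂ + r₁)) (Fin (r₂ + r₁)) ℍ[ℝ],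
      k * kᴴ = 1 ∧ kᴴ * k = 1 ∧
      ∀ (i : Fin r₁) (j : Fin (r₂ + r₁)), (j : ℕ) < r₂ → (V * k) i j = 0 := by
  obtain ⟨c, hON, hW⟩ := exists_orthonormal r₁ r₂ V (r₂ + r₁) le_rfl
  refine ⟨Matrix.of fun j a => c a j, ?_, ?_, ?_⟩
  · apply mul_conjTranspose_of
    refine Matrix.ext fun a b => ?_
    rw [Matrix.mul_apply, Matrix.one_apply]
    simpa [Matrix.conjTranspose_apply] using hON a b
  · refine Matrix.ext fun a b => ?_
    rw [Matrix.mul_apply, Matrix.one_apply]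
    simpa [Matrix.conjTranspose_apply] using hON a b
  · intro i j hj
    rw [Matrix.mul_apply]
    exact hW j hj i
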